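/- Let H, K be complex Hilbert spaces with dim K < ∞, and for closed densely-defined operators T, S from H to K define T̂ = (I + T*T)^{−1/2}T*. Then the map T ↦ T̂ into the open unit ball 𝓑 of B(K,H) is injective, and d(T, S) := K_𝓑(T̂, Ŝ) defines a metric on C(H,K), where K_𝓑 is the Kobayashi metric of 𝓑. -/

import Mathlib

open Metric

/-- Inverse hyperbolic tangent, `tanh⁻¹ t`. -/
noncomputable def artanh (t : ℝ) : ℝ := Real.log ((1 + t) / (1 - t)) / 2

/-- The Poincaré distance on the open unit disc in `ℂ`. -/
noncomputable def poincare (a b : ℂ) : ℝ :=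
  artanh (‖a - b‖ / ‖1 - (starRingEnd ℂ) a * b‖)


lemma artanh_zero : artanh 0 = 0 := by simp [artanh]

lemma artanh_nonneg {t : ℝ} (ht : 0 ≤ t) : 0 ≤ artanh t := by
  unfold artanh
  rcases lt_trichotomy t 1 with h | h | h
  · have h1 : (0:ℝ) < 1 - t := by linarith
    have : (1:ℝ) ≤ (1 + t) / (1 - t) := (le_div_iff₀ h1).mpr (by linarith)
    have := Real.log_nonneg this
    linarith
  · simp [h]
  · have h1 : 1 - t < 0 := by linarith
    have h2 : (1 + t) / (1 - t) ≤ 0 := div_nonpos_of_nonneg_of_nonpos (by linarith) h1.le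
    rw [← Real.log_neg_eq_log]
    have h3 : (1:ℝ) ≤ -((1 + t) / (1 - t)) := by
      rw [← neg_div, le_div_iff_of_neg h1]
      · linarith
    have := Real.log_nonneg h3
    linarith

lemma artanh_pos {t : ℝ} (h0 : 0 < t) (h1 : t < 1) : 0 < artanh t := by
  unfold artanh
  have hd : (0:ℝ) < 1 - t := by linarith
  have : (1:ℝ) < (1 + t) / (1 - t) := (lt_div_iff₀ hd).mpr (by linarith)
  have := Real.log_pos this
  linarith

lemma artanh_mono {a b : ℝ} (ha : 0 ≤ a) (hab : a ≤ b) (hb : b < 1) : artanh a ≤ artanh b := by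
  unfold artanh
  have hda : (0:ℝ) < 1 - a := by linarith
  have hdb : (0:ℝ) < 1 - b := by linarith
  have hna : (0:ℝ) < 1 + a := by linarith
  have h : (1 + a) / (1 - a) ≤ (1 + b) / (1 - b) := by
    rw [div_le_div_iff₀ hda hdb]; nlinarith
  have := Real.log_le_log (by positivity) h
  linarith

lemma artanh_add {s t : ℝ} (hs : 0 ≤ s) (hs1 : s < 1) (ht : 0 ≤ t) (ht1 : t < 1) :
    artanh s + artanh t = artanh ((s + t) / (1 + s * t)) := by
  unfold artanh
  have hds : (0:ℝ) < 1 - s := by linarith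
  have hdt : (0:ℝ) < 1 - t := by linarith
  have hst : (0:ℝ) < 1 + s * t := by nlinarith
  have hd : (0:ℝ) < 1 - (s + t) / (1 + s * t) := by
    rw [sub_pos, div_lt_one hst]; nlinarith
  have key : (1 + (s + t) / (1 + s * t)) / (1 - (s + t) / (1 + s * t))
      = ((1 + s) / (1 - s)) * ((1 + t) / (1 - t)) := by
    have e1 : 1 + (s + t) / (1 + s * t) = ((1 + s) * (1 + t)) / (1 + s * t) := by
      field_simp; ring
    have e2 : 1 - (s + t) / (1 + s * t) = ((1 - s) * (1 - t)) / (1 + s * t) := by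
      field_simp; ring
    rw [e1, e2]
    rw [div_div_div_cancel_right₀]
    · rw [div_mul_div_comm]
    · exact hst.ne'
  rw [key, Real.log_mul (by positivity) (by positivity)]
  ring


/-- Möbius pseudo-distance on the unit disc. -/
noncomputable def pd (a b : ℂ) : ℝ :=
  ‖a - b‖ / ‖1 - (starRingEnd ℂ) a * b‖

lemma pd_nonneg (a b : ℂ) : 0 ≤ pd a b := by
  unfold pd; positivity

lemma pd_symm (a b : ℂ) : pd a b = pd b a := by
  unfold pd
  rw [norm_sub_rev, ← Complex.norm_conj (1 - (starRingEnd ℂ) a * b)]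
  congr 2
  simp only [map_sub, map_one, map_mul, RingHomCompTriple.comp_apply, RingHom.id_apply,
    starRingEnd_self_apply]
  ring

/-- The fundamental identity. -/
lemma normSq_identity (a b : ℂ) :
    Complex.normSq (1 - (starRingEnd ℂ) a * b) - Complex.normSq (a - b)
      = (1 - Complex.normSq a) * (1 - Complex.normSq b) := by
  have key : ((1 - (starRingEnd ℂ) a * b) * (starRingEnd ℂ) (1 - (starRingEnd ℂ) a * b)
      - (a - b) * (starRingEnd ℂ) (a - b))
      = (1 - a * (starRingEnd ℂ) a) * (1 - b * (starRingEnd ℂ) b) := by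
    simp only [map_sub, map_mul, map_one, RingHomCompTriple.comp_apply, RingHom.id_apply,
      starRingEnd_self_apply]
    ring
  rw [Complex.mul_conj, Complex.mul_conj, Complex.mul_conj, Complex.mul_conj] at key
  exact_mod_cast key

lemma normSq_lt_one {a : ℂ} (ha : ‖a‖ < 1) : Complex.normSq a < 1 := by
  nlinarith [Complex.sq_norm a, norm_nonneg a]

lemma den_ne_zero {a b : ℂ} (ha : ‖a‖ < 1) (hb : ‖b‖ < 1) :
    1 - (starRingEnd ℂ) a * b ≠ 0 := by
  intro h
  have h2 : ‖(starRingEnd ℂ) a * b‖ < 1 := by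
    rw [norm_mul, Complex.norm_conj]
    nlinarith [norm_nonneg a, norm_nonneg b]
  have h3 : (starRingEnd ℂ) a * b = 1 := by linear_combination -h
  rw [h3] at h2
  simp at h2

lemma abs_den_pos {a b : ℂ} (ha : ‖a‖ < 1) (hb : ‖b‖ < 1) :
    0 < ‖1 - (starRingEnd ℂ) a * b‖ :=
  norm_pos_iff.mpr (den_ne_zero ha hb)

lemma abs_lt_abs_den {a b : ℂ} (ha : ‖a‖ < 1) (hb : ‖b‖ < 1) :
    ‖a - b‖ < ‖1 - (starRingEnd ℂ) a * b‖ := by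
  have h1 : Complex.normSq (a - b) < Complex.normSq (1 - (starRingEnd ℂ) a * b) := by
    have := normSq_identity a b
    have ha' : Complex.normSq a < 1 := normSq_lt_one ha
    have hb' : Complex.normSq b < 1 := normSq_lt_one hb
    nlinarith
  have := Real.sqrt_lt_sqrt (Complex.normSq_nonneg _) h1
  rwa [← Complex.norm_def, ← Complex.norm_def] at this

lemma pd_lt_one {a b : ℂ} (ha : ‖a‖ < 1) (hb : ‖b‖ < 1) : pd a b < 1 := by
  unfold pd
  rw [div_lt_one (abs_den_pos ha hb)]
  exact abs_lt_abs_den ha hb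

lemma pd_zero_right (a : ℂ) : pd a 0 = ‖a‖ := by
  simp [pd]

lemma pd_zero_left (a : ℂ) : pd 0 a = ‖a‖ := by
  rw [pd_symm, pd_zero_right]

/-- Möbius transformation of the disc sending `b` to `0`. -/
noncomputable def mob (b z : ℂ) : ℂ := (z - b) / (1 - (starRingEnd ℂ) b * z)

lemma abs_mob (b z : ℂ) : ‖mob b z‖ = pd b z := by
  unfold mob pd
  rw [norm_div, norm_sub_rev]

lemma mob_self (b : ℂ) : mob b b = 0 := by simp [mob]

lemma mob_mem {b z : ℂ} (hb : ‖b‖ < 1) (hz : ‖z‖ < 1) :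
    ‖mob b z‖ < 1 := by
  rw [abs_mob]; exact pd_lt_one hb hz

lemma mob_neg_mob {b z : ℂ} (hb : ‖b‖ < 1) (hz : ‖z‖ < 1) :
    mob (-b) (mob b z) = z := by
  unfold mob
  have h1 : 1 - (starRingEnd ℂ) b * z ≠ 0 := den_ne_zero hb hz
  have hb2 : (1 : ℂ) - (starRingEnd ℂ) b * b ≠ 0 := by
    rw [mul_comm, Complex.mul_conj]
    intro h
    have := congrArg Complex.re h
    simp only [Complex.sub_re, Complex.one_re, Complex.ofReal_re, Complex.zero_re] at this
    have := normSq_lt_one hb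
    linarith
  have hnum : (z - b) / (1 - (starRingEnd ℂ) b * z) - -b
      = (z * (1 - (starRingEnd ℂ) b * b)) / (1 - (starRingEnd ℂ) b * z) := by
    rw [eq_div_iff h1, sub_mul, div_mul_cancel₀ _ h1]; ring
  have hden : 1 - (starRingEnd ℂ) (-b) * ((z - b) / (1 - (starRingEnd ℂ) b * z))
      = (1 - (starRingEnd ℂ) b * b) / (1 - (starRingEnd ℂ) b * z) := by
    rw [map_neg]
    field_simp; ring
  rw [hnum, hden, div_div_div_cancel_right₀ h1, mul_div_assoc, div_self hb2, mul_one]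

lemma one_sub_conj_mul_self_ne {b : ℂ} (hb : ‖b‖ < 1) :
    (1 : ℂ) - (starRingEnd ℂ) b * b ≠ 0 := den_ne_zero hb hb

lemma pd_mob_invariant {a b c : ℂ} (ha : ‖a‖ < 1) (hb : ‖b‖ < 1)
    (hc : ‖c‖ < 1) : pd (mob b a) (mob b c) = pd a c := by
  have hba : (1 : ℂ) - (starRingEnd ℂ) b * a ≠ 0 := den_ne_zero hb ha
  have hbc : (1 : ℂ) - (starRingEnd ℂ) b * c ≠ 0 := den_ne_zero hb hc
  have hbb : (1 : ℂ) - (starRingEnd ℂ) b * b ≠ 0 := den_ne_zero hb hb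
  have hba' : (1 : ℂ) - b * (starRingEnd ℂ) a ≠ 0 := by
    intro h
    apply hba
    have := congrArg (starRingEnd ℂ) h
    simpa [map_sub, map_mul, mul_comm] using this
  have hnum : mob b a - mob b c
      = ((a - c) * (1 - (starRingEnd ℂ) b * b))
        / ((1 - (starRingEnd ℂ) b * a) * (1 - (starRingEnd ℂ) b * c)) := by
    unfold mob
    rw [div_sub_div _ _ hba hbc]; congr 1; ring
  have hconj : (starRingEnd ℂ) (mob b a) = ((starRingEnd ℂ) a - (starRingEnd ℂ) b)
      / (1 - b * (starRingEnd ℂ) a) := by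
    unfold mob
    rw [map_div₀]
    simp [map_sub, map_mul]
  have hden : 1 - (starRingEnd ℂ) (mob b a) * mob b c
      = ((1 - (starRingEnd ℂ) a * c) * (1 - (starRingEnd ℂ) b * b))
        / ((1 - b * (starRingEnd ℂ) a) * (1 - (starRingEnd ℂ) b * c)) := by
    rw [hconj]
    unfold mob
    rw [div_mul_div_comm, one_sub_div (mul_ne_zero hba' hbc)]; congr 1; ring
  unfold pd
  rw [hnum, hden, norm_div, norm_div, norm_mul, norm_mul, norm_mul, norm_mul]
  have e1 : ‖1 - b * (starRingEnd ℂ) a‖ = ‖1 - (starRingEnd ℂ) b * a‖ := by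
    rw [← Complex.norm_conj (1 - b * (starRingEnd ℂ) a)]
    congr 1
    simp [map_sub, map_mul, mul_comm]
  rw [e1]
  set X := ‖a - c‖
  set Y := ‖1 - (starRingEnd ℂ) a * c‖
  set L := ‖1 - (starRingEnd ℂ) b * b‖
  set M := ‖1 - (starRingEnd ℂ) b * a‖ * ‖1 - (starRingEnd ℂ) b * c‖
  have hL : L ≠ 0 := by simp [L, norm_ne_zero_iff, hbb]
  have hM : M ≠ 0 := by
    simp only [M, mul_ne_zero_iff, norm_ne_zero_iff]
    exact ⟨hba, hbc⟩
  rw [div_div_div_cancel_right₀ hM, mul_div_mul_right _ _ hL]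

lemma mob_differentiableOn {b : ℂ} (hb : ‖b‖ < 1) :
    DifferentiableOn ℂ (mob b) (Metric.ball 0 1) := by
  apply DifferentiableOn.div
  · exact (differentiable_id.sub_const b).differentiableOn
  · exact ((differentiable_const _).mul differentiable_id).const_sub 1 |>.differentiableOn
  · intro z hz
    exact den_ne_zero hb (by simpa using mem_ball_zero_iff.mp hz)

lemma mob_mapsTo {b : ℂ} (hb : ‖b‖ < 1) :
    Set.MapsTo (mob b) (Metric.ball 0 1) (Metric.ball 0 1) := by
  intro z hz
  rw [mem_ball_zero_iff] at hz ⊢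
  simpa using mob_mem hb (by simpa using hz)

lemma schwarz_pick {g : ℂ → ℂ} (hd : DifferentiableOn ℂ g (Metric.ball 0 1))
    (hm : Set.MapsTo g (Metric.ball 0 1) (Metric.ball 0 1))
    {a b : ℂ} (ha : ‖a‖ < 1) (hb : ‖b‖ < 1) :
    pd (g a) (g b) ≤ pd a b := by
  have hamem : a ∈ Metric.ball (0:ℂ) 1 :=
    mem_ball_zero_iff.mpr (by simpa using ha)
  have hga : ‖g a‖ < 1 := by
    simpa using mem_ball_zero_iff.mp (hm hamem)
  have hna : ‖-a‖ < 1 := by simpa using ha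
  set h : ℂ → ℂ := fun ζ => mob (g a) (g (mob (-a) ζ)) with hh
  have hdh : DifferentiableOn ℂ h (Metric.ball 0 1) := by
    apply DifferentiableOn.comp (mob_differentiableOn hga)
    · exact DifferentiableOn.comp hd (mob_differentiableOn hna) (mob_mapsTo hna)
    · exact ((hm.comp (mob_mapsTo hna)))
  have hmh : Set.MapsTo h (Metric.ball 0 1) (Metric.ball 0 1) :=
    (mob_mapsTo hga).comp (hm.comp (mob_mapsTo hna))
  have h0 : h 0 = 0 := by
    have : mob (-a) 0 = a := by simp [mob]
    rw [hh]; simp only [this, mob_self]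
  have hz : ‖mob a b‖ < 1 := mob_mem ha hb
  have := Complex.norm_le_norm_of_mapsTo_ball hdh (hmh.mono_right Metric.ball_subset_closedBall) h0 hz
  have hval : h (mob a b) = mob (g a) (g b) := by
    rw [hh]; simp only [mob_neg_mob ha hb]
  rw [hval] at this
  calc pd (g a) (g b) = ‖mob (g a) (g b)‖ := (abs_mob _ _).symm
    _ ≤ ‖mob a b‖ := this
    _ = pd a b := abs_mob _ _

lemma poincare_eq_artanh_pd (a b : ℂ) : poincare a b = artanh (pd a b) := rfl

lemma poincare_nonneg (a b : ℂ) : 0 ≤ poincare a b :=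
  artanh_nonneg (pd_nonneg a b)

lemma poincare_symm (a b : ℂ) : poincare a b = poincare b a := by
  rw [poincare_eq_artanh_pd, poincare_eq_artanh_pd, pd_symm]

lemma poincare_self (a : ℂ) : poincare a a = 0 := by
  rw [poincare_eq_artanh_pd]
  simp [pd, artanh_zero]

lemma poincare_schwarz_pick {g : ℂ → ℂ} (hd : DifferentiableOn ℂ g (Metric.ball 0 1))
    (hm : Set.MapsTo g (Metric.ball 0 1) (Metric.ball 0 1))
    {a b : ℂ} (ha : ‖a‖ < 1) (hb : ‖b‖ < 1) :
    poincare (g a) (g b) ≤ poincare a b := by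
  rw [poincare_eq_artanh_pd, poincare_eq_artanh_pd]
  exact artanh_mono (pd_nonneg _ _) (schwarz_pick hd hm ha hb) (pd_lt_one ha hb)

lemma pd_le_add {α γ : ℂ} (hα : ‖α‖ < 1) (hγ : ‖γ‖ < 1) :
    pd α γ ≤ (‖α‖ + ‖γ‖) / (1 + ‖α‖ * ‖γ‖) := by
  set s := ‖α‖ with hs
  set t := ‖γ‖ with ht
  have hs0 : 0 ≤ s := norm_nonneg α
  have ht0 : 0 ≤ t := norm_nonneg γ
  set r := ((starRingEnd ℂ) α * γ).re with hr
  have hrabs : |r| ≤ s * t := by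
    calc |r| ≤ ‖(starRingEnd ℂ) α * γ‖ := Complex.abs_re_le_norm _
      _ = s * t := by rw [norm_mul, Complex.norm_conj]
  have hr1 : -(s*t) ≤ r := neg_le_of_abs_le hrabs
  have hNum : Complex.normSq (α - γ) = s^2 + t^2 - 2*r := by
    rw [Complex.normSq_sub, ← Complex.sq_norm, ← Complex.sq_norm]
    have : (α * (starRingEnd ℂ) γ).re = r := by
      rw [hr, ← Complex.conj_re ((starRingEnd ℂ) α * γ)]
      congr 1
      simp [map_mul, mul_comm]
    rw [this]
  have hDen : Complex.normSq (1 - (starRingEnd ℂ) α * γ) = 1 - 2*r + s^2*t^2 := by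
    rw [Complex.normSq_sub]
    simp only [Complex.normSq_one, Complex.normSq_mul, Complex.normSq_conj]
    rw [← Complex.sq_norm, ← Complex.sq_norm]
    have : (1 * (starRingEnd ℂ) ((starRingEnd ℂ) α * γ)).re = r := by
      rw [one_mul, Complex.conj_re]
    rw [this]; ring
  have habsDen : 0 < ‖1 - (starRingEnd ℂ) α * γ‖ := abs_den_pos hα hγ
  have hsum : (0:ℝ) < 1 + s * t := by nlinarith
  rw [pd, div_le_div_iff₀ habsDen hsum]
  have hsq : (‖α - γ‖ * (1 + s * t))^2
      ≤ ((s + t) * ‖1 - (starRingEnd ℂ) α * γ‖)^2 := by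
    have e1 : (‖α - γ‖ * (1 + s * t))^2
        = (s^2 + t^2 - 2*r) * (1 + s*t)^2 := by
      rw [mul_pow, Complex.sq_norm, hNum]
    have e2 : ((s + t) * ‖1 - (starRingEnd ℂ) α * γ‖)^2
        = (s + t)^2 * (1 - 2*r + s^2*t^2) := by
      rw [mul_pow, Complex.sq_norm, hDen]
    rw [e1, e2]
    have hs1 : s < 1 := hα
    have ht1 : t < 1 := hγ
    have key : (s + t)^2 * (1 - 2*r + s^2*t^2) - (s^2 + t^2 - 2*r) * (1 + s*t)^2
        = 2*(r + s*t) * ((1+s) * (1+t) * ((1-s) * (1-t))) := by ring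
    nlinarith [mul_nonneg (mul_nonneg (by nlinarith : (0:ℝ) ≤ 2*(r+s*t))
      (by nlinarith : (0:ℝ) ≤ (1+s)*(1+t))) (by nlinarith : (0:ℝ) ≤ (1-s)*(1-t))]
  have h1 : 0 ≤ ‖α - γ‖ * (1 + s * t) := by positivity
  have h2 : 0 ≤ (s + t) * ‖1 - (starRingEnd ℂ) α * γ‖ := by positivity
  nlinarith [hsq]

lemma poincare_triangle {a b c : ℂ} (ha : ‖a‖ < 1) (hb : ‖b‖ < 1)
    (hc : ‖c‖ < 1) : poincare a c ≤ poincare a b + poincare b c := by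
  set α := mob b a with hα
  set γ := mob b c with hγ
  have hαm : ‖α‖ < 1 := mob_mem hb ha
  have hγm : ‖γ‖ < 1 := mob_mem hb hc
  have hs0 : 0 ≤ ‖α‖ := norm_nonneg α
  have ht0 : 0 ≤ ‖γ‖ := norm_nonneg γ
  have hpdac : pd a c = pd α γ := (pd_mob_invariant ha hb hc).symm
  have hpdab : pd a b = ‖α‖ := by
    have := pd_mob_invariant ha hb hb
    rw [mob_self, pd_zero_right] at this
    exact this.symm
  have hpdbc : pd b c = ‖γ‖ := by
    have := pd_mob_invariant hb hb hc
    rw [mob_self, pd_zero_left] at this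
    exact this.symm
  rw [poincare_eq_artanh_pd, poincare_eq_artanh_pd, poincare_eq_artanh_pd,
    hpdac, hpdab, hpdbc]
  have hlt1 : (‖α‖ + ‖γ‖) / (1 + ‖α‖ * ‖γ‖) < 1 := by
    rw [div_lt_one (by nlinarith)]
    nlinarith
  calc artanh (pd α γ) ≤ artanh ((‖α‖ + ‖γ‖)
        / (1 + ‖α‖ * ‖γ‖)) :=
      artanh_mono (pd_nonneg _ _) (pd_le_add hαm hγm) hlt1
    _ = artanh (‖α‖) + artanh (‖γ‖) :=
      (artanh_add hs0 hαm ht0 hγm).symm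

/-- An analytic chain joining `x` and `y` in the open unit ball of a complex normed space `X`:
points `z i`, `w i` of the unit disc and holomorphic maps `f i` from the unit disc into the
unit ball with `f 0 (z 0) = x`, `f i (w i) = f (i+1) (z (i+1))`, `f (n-1) (w (n-1)) = y`. -/
structure AnalyticChain (X : Type*) [NormedAddCommGroup X] [NormedSpace ℂ X]
    (x y : X) : Type _ where
  n : ℕ
  npos : 0 < n
  z : ℕ → ℂ
  w : ℕ → ℂ
  hz : ∀ i < n, ‖z i‖ < 1
  hw : ∀ i < n, ‖w i‖ < 1
  f : ℕ → ℂ → X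
  holo : ∀ i < n, DifferentiableOn ℂ (f i) (ball (0 : ℂ) 1)
  maps : ∀ i < n, ∀ ζ ∈ ball (0 : ℂ) 1, f i ζ ∈ ball (0 : X) 1
  first : f 0 (z 0) = x
  last : f (n - 1) (w (n - 1)) = y
  link : ∀ i, i + 1 < n → f i (w i) = f (i + 1) (z (i + 1))

/-- The total Poincaré length of an analytic chain. -/
noncomputable def AnalyticChain.length {X : Type*} [NormedAddCommGroup X] [NormedSpace ℂ X]
    {x y : X} (c : AnalyticChain X x y) : ℝ :=
  ∑ i ∈ Finset.range c.n, poincare (c.z i) (c.w i)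

/-- The Kobayashi pseudo-metric on the open unit ball of `X`: the infimum of the lengths of
analytic chains joining `x` and `y`. -/
noncomputable def kobayashi (X : Type*) [NormedAddCommGroup X] [NormedSpace ℂ X]
    (x y : X) : ℝ :=
  sInf {r : ℝ | ∃ c : AnalyticChain X x y, c.length = r}



section Chains

variable {X : Type*} [NormedAddCommGroup X] [NormedSpace ℂ X] {x y zz : X}

lemma sum_range_add' {M : Type*} [AddCommMonoid M] (g : ℕ → M) (m n : ℕ) :
    ∑ i ∈ Finset.range (m + n), g i
      = (∑ i ∈ Finset.range m, g i) + ∑ i ∈ Finset.range n, g (m + i) := by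
  induction n with
  | zero => simp
  | succ k ih => rw [← Nat.add_assoc, Finset.sum_range_succ, ih, Finset.sum_range_succ, add_assoc]

lemma AnalyticChain.length_nonneg (c : AnalyticChain X x y) : 0 ≤ c.length :=
  Finset.sum_nonneg fun i _ => poincare_nonneg _ _

lemma AnalyticChain.x_mem (c : AnalyticChain X x y) : x ∈ Metric.ball (0 : X) 1 := by
  rw [← c.first]
  exact c.maps 0 c.npos (c.z 0)
    (mem_ball_zero_iff.mpr (by simpa using c.hz 0 c.npos))

lemma AnalyticChain.y_mem (c : AnalyticChain X x y) : y ∈ Metric.ball (0 : X) 1 := by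
  rw [← c.last]
  have hn : c.n - 1 < c.n := Nat.sub_lt c.npos one_pos
  exact c.maps _ hn (c.w _)
    (mem_ball_zero_iff.mpr (by simpa using c.hw _ hn))

/-- Reversal of an analytic chain. -/
def AnalyticChain.reverse (c : AnalyticChain X x y) : AnalyticChain X y x where
  n := c.n
  npos := c.npos
  z := fun i => c.w (c.n - 1 - i)
  w := fun i => c.z (c.n - 1 - i)
  hz := fun i hi => c.hw _ (by omega)
  hw := fun i hi => c.hz _ (by omega)
  f := fun i => c.f (c.n - 1 - i)
  holo := fun i hi => c.holo _ (by omega)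
  maps := fun i hi => c.maps _ (by omega)
  first := by simpa using c.last
  last := by simpa using c.first
  link := by
    intro i hi
    have h := c.link (c.n - 1 - (i + 1)) (by omega)
    have e1 : c.n - 1 - (i + 1) + 1 = c.n - 1 - i := by omega
    rw [e1] at h
    exact h.symm

lemma AnalyticChain.length_reverse (c : AnalyticChain X x y) :
    c.reverse.length = c.length := by
  unfold AnalyticChain.length
  show (∑ i ∈ Finset.range c.n, poincare (c.w (c.n - 1 - i)) (c.z (c.n - 1 - i))) = _
  rw [Finset.sum_range_reflect (fun i => poincare (c.w i) (c.z i)) c.n]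
  exact Finset.sum_congr rfl fun i _ => poincare_symm _ _

/-- Concatenation of analytic chains. -/
def AnalyticChain.concat (c₁ : AnalyticChain X x y) (c₂ : AnalyticChain X y zz) :
    AnalyticChain X x zz where
  n := c₁.n + c₂.n
  npos := by have := c₁.npos; omega
  z := fun i => if i < c₁.n then c₁.z i else c₂.z (i - c₁.n)
  w := fun i => if i < c₁.n then c₁.w i else c₂.w (i - c₁.n)
  hz := by
    intro i hi
    by_cases h : i < c₁.n
    · simpa [h] using c₁.hz i h
    · simpa [h] using c₂.hz (i - c₁.n) (by omega)
  hw := by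
    intro i hi
    by_cases h : i < c₁.n
    · simpa [h] using c₁.hw i h
    · simpa [h] using c₂.hw (i - c₁.n) (by omega)
  f := fun i => if i < c₁.n then c₁.f i else c₂.f (i - c₁.n)
  holo := by
    intro i hi
    by_cases h : i < c₁.n
    · simpa [h] using c₁.holo i h
    · simpa [h] using c₂.holo (i - c₁.n) (by omega)
  maps := by
    intro i hi
    by_cases h : i < c₁.n
    · simpa [h] using c₁.maps i h
    · simpa [h] using c₂.maps (i - c₁.n) (by omega)
  first := by
    have h : 0 < c₁.n := c₁.npos
    simpa [h] using c₁.first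
  last := by
    have h2 := c₂.npos
    have h : ¬ (c₁.n + c₂.n - 1 < c₁.n) := by omega
    have e : c₁.n + c₂.n - 1 - c₁.n = c₂.n - 1 := by omega
    simpa [h, e] using c₂.last
  link := by
    intro i hi
    by_cases h1 : i + 1 < c₁.n
    · have h0 : i < c₁.n := by omega
      simpa [h0, h1] using c₁.link i h1
    · by_cases h2 : i + 1 = c₁.n
      · have h0 : i < c₁.n := by omega
        have h3 : ¬ (i + 1 < c₁.n) := by omega
        have e : i + 1 - c₁.n = 0 := by omega
        simp only [h0, h3, if_true, if_false, e]
        have e2 : c₁.n - 1 = i := by omega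
        have hl := c₁.last
        rw [e2] at hl
        rw [hl, c₂.first]
      · have h0 : ¬ (i < c₁.n) := by omega
        have h3 : ¬ (i + 1 < c₁.n) := by omega
        have e : i + 1 - c₁.n = (i - c₁.n) + 1 := by omega
        simp only [h0, h3, if_false, e]
        exact c₂.link (i - c₁.n) (by omega)

lemma AnalyticChain.length_concat (c₁ : AnalyticChain X x y) (c₂ : AnalyticChain X y zz) :
    (c₁.concat c₂).length = c₁.length + c₂.length := by
  unfold AnalyticChain.length
  show (∑ i ∈ Finset.range (c₁.n + c₂.n), _) = _
  rw [sum_range_add']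
  congr 1
  · apply Finset.sum_congr rfl
    intro i hi
    have h : i < c₁.n := Finset.mem_range.mp hi
    simp [AnalyticChain.concat, h]
  · apply Finset.sum_congr rfl
    intro i hi
    have h : ¬ (c₁.n + i < c₁.n) := by omega
    have e : c₁.n + i - c₁.n = i := by omega
    simp [AnalyticChain.concat, h, e]

/-- A one-parameter family of short affine chains joining two points of the unit ball. -/
lemma exists_chain (hx : ‖x‖ < 1) (hy : ‖y‖ < 1) : Nonempty (AnalyticChain X x y) := by
  set m : ℝ := max ‖x‖ ‖y‖ with hm
  have hm1 : m < 1 := max_lt hx hy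
  have hm0 : 0 ≤ m := le_trans (norm_nonneg x) (le_max_left _ _)
  set v : X := y - x with hv
  obtain ⟨N, hN⟩ := exists_nat_gt ((4 * ‖v‖ + 4) / (1 - m))
  have hN0 : 0 < (N : ℝ) := lt_of_le_of_lt (div_nonneg (by positivity) (by linarith)) hN
  have hNn : 0 < N := by exact_mod_cast hN0
  have hstep : 2 * ‖v‖ / N < (1 - m) / 2 := by
    rw [div_lt_div_iff₀ hN0 (by norm_num)]
    have h1 : (4 * ‖v‖ + 4) < N * (1 - m) := by
      rw [div_lt_iff₀ (by linarith)] at hN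
      linarith
    nlinarith [norm_nonneg v]
  refine ⟨⟨N, hNn, fun _ => 0, fun _ => 1/2, ?_, ?_,
    fun i ζ => x + ((i : ℂ) / N) • v + ζ • (((2 : ℂ) / N) • v), ?_, ?_, ?_, ?_, ?_⟩⟩
  · intro i _; simp
  · intro i _
    rw [norm_div]
    simp [Complex.norm_two]
    norm_num
  · intro i _
    exact (((differentiable_const _).add
      (differentiable_id.smul_const _)).differentiableOn)
  · intro i hi ζ hζ
    rw [mem_ball_zero_iff] at hζ ⊢
    have hti : (0:ℝ) ≤ (i : ℝ) / N := by positivity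
    have hti1 : (i : ℝ) / N ≤ 1 := by
      rw [div_le_one hN0]
      exact_mod_cast hi.le
    have hseg : ‖x + ((i : ℂ) / N) • v‖ ≤ m := by
      have e : x + ((i : ℂ) / N) • v = ((1 : ℂ) - (i : ℂ)/N) • x + ((i : ℂ)/N) • y := by
        rw [hv, smul_sub, sub_smul, one_smul]
        abel
      rw [e]
      calc ‖((1 : ℂ) - (i : ℂ)/N) • x + ((i : ℂ)/N) • y‖
          ≤ ‖((1 : ℂ) - (i : ℂ)/N) • x‖ + ‖((i : ℂ)/N) • y‖ := norm_add_le _ _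
        _ = ‖(1 : ℂ) - (i : ℂ)/N‖ * ‖x‖ + ‖(i : ℂ)/N‖ * ‖y‖ := by rw [norm_smul, norm_smul]
        _ = (1 - (i:ℝ)/N) * ‖x‖ + ((i:ℝ)/N) * ‖y‖ := by
            congr 1
            · congr 1
              have : (1 : ℂ) - (i : ℂ)/N = (((1 - (i:ℝ)/N : ℝ)) : ℂ) := by push_cast; ring
              rw [this, Complex.norm_real, Real.norm_eq_abs, abs_of_nonneg (by linarith)]
            · congr 1
              have : (i : ℂ)/N = (((i : ℝ)/N : ℝ) : ℂ) := by push_cast; ring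
              rw [this, Complex.norm_real, Real.norm_eq_abs, abs_of_nonneg hti]
        _ ≤ (1 - (i:ℝ)/N) * m + ((i:ℝ)/N) * m := by
            apply add_le_add
            · exact mul_le_mul_of_nonneg_left (le_max_left _ _) (by linarith)
            · exact mul_le_mul_of_nonneg_left (le_max_right _ _) hti
        _ = m := by ring
    calc ‖x + ((i : ℂ) / N) • v + ζ • (((2 : ℂ) / N) • v)‖
        ≤ ‖x + ((i : ℂ) / N) • v‖ + ‖ζ • (((2 : ℂ) / N) • v)‖ := norm_add_le _ _
      _ ≤ m + ‖ζ‖ * ‖((2 : ℂ) / N) • v‖ := by rw [norm_smul]; exact add_le_add hseg le_rfl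
      _ ≤ m + 1 * (2 * ‖v‖ / N) := by
          apply add_le_add le_rfl
          apply mul_le_mul hζ.le _ (norm_nonneg _) zero_le_one
          rw [norm_smul]
          apply le_of_eq
          have : ‖(2 : ℂ)/N‖ = 2 / N := by
            rw [norm_div]
            simp [Complex.norm_natCast]
          rw [this]; ring
      _ < 1 := by rw [one_mul]; linarith [hstep]
  · simp
  · show x + (((N - 1 : ℕ) : ℂ)/N) • v + (1/2 : ℂ) • (((2:ℂ)/N) • v) = y
    have hN' : (N : ℂ) ≠ 0 := Nat.cast_ne_zero.mpr hNn.ne'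
    have he : ((N - 1 : ℕ) : ℂ) = (N : ℂ) - 1 := by
      push_cast [Nat.cast_sub hNn]
      ring
    rw [he, smul_smul, add_assoc, ← add_smul]
    have hco : ((N : ℂ) - 1)/N + (1/2) * ((2:ℂ)/N) = 1 := by field_simp; ring
    rw [hco, one_smul, hv]
    abel
  · intro i hi
    show x + (((i : ℕ) : ℂ)/N) • v + (1/2 : ℂ) • (((2:ℂ)/N) • v)
        = x + (((i + 1 : ℕ) : ℂ)/N) • v + (0 : ℂ) • (((2:ℂ)/N) • v)
    have hN' : (N : ℂ) ≠ 0 := Nat.cast_ne_zero.mpr hNn.ne'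
    rw [smul_smul, zero_smul, add_zero, add_assoc, ← add_smul]
    have hco : ((i : ℕ) : ℂ)/N + (1/2) * ((2:ℂ)/N) = ((i + 1 : ℕ) : ℂ)/N := by
      push_cast
      field_simp
    rw [hco]

lemma kobayashi_nonneg' (a b : X) : 0 ≤ kobayashi X a b :=
  Real.sInf_nonneg fun r ⟨c, hc⟩ => hc ▸ c.length_nonneg

lemma kobayashi_bddBelow (a b : X) :
    BddBelow {r : ℝ | ∃ c : AnalyticChain X a b, c.length = r} :=
  ⟨0, fun r ⟨c, hc⟩ => hc ▸ c.length_nonneg⟩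

lemma kobayashi_le_length {a b : X} (c : AnalyticChain X a b) :
    kobayashi X a b ≤ c.length :=
  csInf_le (kobayashi_bddBelow a b) ⟨c, rfl⟩

/-- The constant chain at a point of the ball. -/
def constChain {a : X} (ha : ‖a‖ < 1) : AnalyticChain X a a :=
  ⟨1, one_pos, fun _ => 0, fun _ => 0, fun _ _ => by simp, fun _ _ => by simp,
    fun _ _ => a, fun _ _ => differentiableOn_const a,
    fun _ _ _ _ => mem_ball_zero_iff.mpr ha, rfl, rfl, fun _ _ => rfl⟩

lemma kobayashi_self {a : X} (ha : ‖a‖ < 1) : kobayashi X a a = 0 := by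
  refine le_antisymm ?_ (kobayashi_nonneg' a a)
  have hlen : (constChain ha).length = 0 := by
    simp [AnalyticChain.length, constChain, poincare_self]
  calc kobayashi X a a ≤ (constChain ha).length := kobayashi_le_length _
    _ = 0 := hlen

lemma kobayashi_symm' (a b : X) : kobayashi X a b = kobayashi X b a := by
  unfold kobayashi
  congr 1
  ext r
  constructor
  · rintro ⟨c, hc⟩
    exact ⟨c.reverse, by rw [c.length_reverse, hc]⟩
  · rintro ⟨c, hc⟩
    exact ⟨c.reverse, by rw [c.length_reverse, hc]⟩

lemma chain_set_nonempty {a b : X} (ha : ‖a‖ < 1) (hb : ‖b‖ < 1) :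
    {r : ℝ | ∃ c : AnalyticChain X a b, c.length = r}.Nonempty :=
  (exists_chain ha hb).elim fun c => ⟨c.length, c, rfl⟩

lemma kobayashi_triangle' {a b c : X} (ha : ‖a‖ < 1) (hb : ‖b‖ < 1) (hc : ‖c‖ < 1) :
    kobayashi X a c ≤ kobayashi X a b + kobayashi X b c := by
  have key : ∀ (c₁ : AnalyticChain X a b) (c₂ : AnalyticChain X b c),
      kobayashi X a c ≤ c₁.length + c₂.length := by
    intro c₁ c₂
    calc kobayashi X a c ≤ (c₁.concat c₂).length := kobayashi_le_length _
      _ = c₁.length + c₂.length := c₁.length_concat c₂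
  obtain ⟨c₂⟩ := exists_chain hb hc
  have h1 : kobayashi X a c - c₂.length ≤ kobayashi X a b := by
    apply le_csInf (chain_set_nonempty ha hb)
    rintro r ⟨c₁, rfl⟩
    linarith [key c₁ c₂]
  have h2 : kobayashi X a c - kobayashi X a b ≤ kobayashi X b c := by
    apply le_csInf (chain_set_nonempty hb hc)
    rintro r ⟨c₂', rfl⟩
    have h1' : kobayashi X a c - c₂'.length ≤ kobayashi X a b := by
      apply le_csInf (chain_set_nonempty ha hb)
      rintro r' ⟨c₁, rfl⟩
      linarith [key c₁ c₂']
    linarith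
  linarith

/-- Lower bound for chain length via a linear functional of norm at most one. -/
lemma poincare_le_chain_length (φ : X →L[ℂ] ℂ) (hφ : ‖φ‖ ≤ 1)
    (c : AnalyticChain X x y) : poincare (φ x) (φ y) ≤ c.length := by
  have habs : ∀ v : X, v ∈ Metric.ball (0 : X) 1 → ‖φ v‖ < 1 := by
    intro v hv
    rw [mem_ball_zero_iff] at hv
    calc ‖φ v‖ = ‖φ v‖ := rfl
      _ ≤ ‖φ‖ * ‖v‖ := φ.le_opNorm v
      _ ≤ 1 * ‖v‖ := mul_le_mul_of_nonneg_right hφ (norm_nonneg v)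
      _ < 1 := by rw [one_mul]; exact hv
  have hsp : ∀ i, i < c.n → poincare (φ (c.f i (c.z i))) (φ (c.f i (c.w i)))
      ≤ poincare (c.z i) (c.w i) := by
    intro i hi
    apply poincare_schwarz_pick
      (φ.differentiable.comp_differentiableOn (c.holo i hi))
      (fun ζ hζ => mem_ball_zero_iff.mpr (by
        simpa using habs _ (c.maps i hi ζ hζ)))
      (c.hz i hi) (c.hw i hi)
  have hmemf : ∀ i, i < c.n → ∀ ζ, ‖ζ‖ < 1 →
      ‖φ (c.f i ζ)‖ < 1 := by
    intro i hi ζ hζ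
    exact habs _ (c.maps i hi ζ (mem_ball_zero_iff.mpr (by
      simpa using hζ)))
  have key : ∀ j, j < c.n → poincare (φ x) (φ (c.f j (c.w j)))
      ≤ ∑ i ∈ Finset.range (j + 1), poincare (c.z i) (c.w i) := by
    intro j
    induction j with
    | zero =>
      intro hj
      have e : φ (c.f 0 (c.z 0)) = φ x := congrArg φ c.first
      rw [← e]
      simpa using hsp 0 hj
    | succ k ih =>
      intro hj
      have hk : k < c.n := by omega
      have h1 := ih hk
      have htri : poincare (φ x) (φ (c.f (k+1) (c.w (k+1))))
          ≤ poincare (φ x) (φ (c.f k (c.w k)))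
            + poincare (φ (c.f k (c.w k))) (φ (c.f (k+1) (c.w (k+1)))) := by
        apply poincare_triangle
        · exact habs x c.x_mem
        · exact hmemf k hk _ (c.hw k hk)
        · exact hmemf (k+1) hj _ (c.hw (k+1) hj)
      have hlink : poincare (φ (c.f k (c.w k))) (φ (c.f (k+1) (c.w (k+1))))
          ≤ poincare (c.z (k+1)) (c.w (k+1)) := by
        rw [c.link k hj]
        exact hsp (k+1) hj
      rw [Finset.sum_range_succ]
      linarith
  have hfin := key (c.n - 1) (Nat.sub_lt c.npos one_pos)
  rw [c.last] at hfin
  have : c.n - 1 + 1 = c.n := Nat.succ_pred_eq_of_pos c.npos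
  rw [this] at hfin
  exact hfin

lemma kobayashi_pos_of_ne {a b : X} (ha : ‖a‖ < 1) (hb : ‖b‖ < 1) (hne : a ≠ b) :
    0 < kobayashi X a b := by
  obtain ⟨φ, hφn, hφv⟩ := exists_dual_vector ℂ (a - b) (norm_ne_zero_iff.mpr (sub_ne_zero.mpr hne))
  have hlow : poincare (φ a) (φ b) ≤ kobayashi X a b := by
    apply le_csInf (chain_set_nonempty ha hb)
    rintro r ⟨c, rfl⟩
    exact poincare_le_chain_length φ hφn.le c
  refine lt_of_lt_of_le ?_ hlow
  have hφa : ‖φ a‖ < 1 := by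
    calc ‖φ a‖ = ‖φ a‖ := rfl
      _ ≤ ‖φ‖ * ‖a‖ := φ.le_opNorm a
      _ < 1 := by rw [hφn, one_mul]; exact ha
  have hφb : ‖φ b‖ < 1 := by
    calc ‖φ b‖ = ‖φ b‖ := rfl
      _ ≤ ‖φ‖ * ‖b‖ := φ.le_opNorm b
      _ < 1 := by rw [hφn, one_mul]; exact hb
  rw [poincare_eq_artanh_pd]
  apply artanh_pos _ (pd_lt_one hφa hφb)
  unfold pd
  apply div_pos _ (abs_den_pos hφa hφb)
  rw [norm_pos_iff]
  intro h
  have : φ (a - b) = 0 := by rw [map_sub, h]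
  rw [hφv] at this
  have hab : ‖a - b‖ ≠ 0 := norm_ne_zero_iff.mpr (sub_ne_zero.mpr hne)
  exact hab (Complex.ofReal_eq_zero.mp this)

end Chains

/-- A closed densely-defined operator from `H` to `K`: an element of `C(H,K)`. -/
structure ClosedDenseOp (H K : Type*) [NormedAddCommGroup H] [InnerProductSpace ℂ H]
    [NormedAddCommGroup K] [InnerProductSpace ℂ K] : Type _ where
  op : H →ₗ.[ℂ] K
  dense : Dense (op.domain : Set H)
  closed : op.IsClosed


section Operators

open scoped InnerProductSpace

variable {H K : Type*} [NormedAddCommGroup H] [InnerProductSpace ℂ H] [CompleteSpace H]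
  [NormedAddCommGroup K] [InnerProductSpace ℂ K] [FiniteDimensional ℂ K]

lemma norm_sq_re_inner {E : Type*} [NormedAddCommGroup E] [InnerProductSpace ℂ E] (v : E) :
    ‖v‖^2 = (⟪v, v⟫_ℂ).re := by
  rw [@norm_sq_eq_re_inner ℂ]
  simp [RCLike.re_to_complex]

lemma pmapCongr {R E F : Type*} [Ring R] [AddCommGroup E] [Module R E] [AddCommGroup F]
    [Module R F] (T : E →ₗ.[R] F) {a b : E} (ha : a ∈ T.domain) (hb : b ∈ T.domain)
    (h : a = b) : T ⟨a, ha⟩ = T ⟨b, hb⟩ := by cases h; rfl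

/-- Pointwise strict contraction of `T̂`. -/
lemma hat_apply_norm_lt (T : ClosedDenseOp H K) (A : K →L[ℂ] H) (S : H →L[ℂ] H)
    (hS : S.IsPositive)
    (h1 : ∀ u : H, ∃ (hx : S (S u) ∈ T.op.domain)
          (hy : T.op ⟨S (S u), hx⟩ ∈ T.op.adjoint.domain),
        S (S u) + T.op.adjoint ⟨T.op ⟨S (S u), hx⟩, hy⟩ = u)
    (h3 : ∀ y : K, ∃ hy : y ∈ T.op.adjoint.domain, A y = S (T.op.adjoint ⟨y, hy⟩))
    {y : K} (hy0 : y ≠ 0) : ‖A y‖ < ‖y‖ := by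
  have hsym := hS.1
  have hadj := T.op.adjoint_isFormalAdjoint T.dense
  obtain ⟨hy, hAy⟩ := h3 y
  obtain ⟨hx, hk, heq⟩ := h1 (T.op.adjoint ⟨y, hy⟩)
  have i3 : ⟪A y, A y⟫_ℂ
      = ⟪T.op.adjoint ⟨y, hy⟩, S (S (T.op.adjoint ⟨y, hy⟩))⟫_ℂ := by
    rw [hAy]
    exact hsym _ _
  have i2 : ⟪T.op.adjoint ⟨y, hy⟩, S (S (T.op.adjoint ⟨y, hy⟩))⟫_ℂ
      = ⟪S (S (T.op.adjoint ⟨y, hy⟩)), S (S (T.op.adjoint ⟨y, hy⟩))⟫_ℂ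
        + ⟪(T.op ⟨S (S (T.op.adjoint ⟨y, hy⟩)), hx⟩ : K),
            (T.op ⟨S (S (T.op.adjoint ⟨y, hy⟩)), hx⟩ : K)⟫_ℂ := by
    have hadj2 : ⟪(T.op.adjoint ⟨T.op ⟨S (S (T.op.adjoint ⟨y, hy⟩)), hx⟩, hk⟩ : H),
        S (S (T.op.adjoint ⟨y, hy⟩))⟫_ℂ
        = ⟪(T.op ⟨S (S (T.op.adjoint ⟨y, hy⟩)), hx⟩ : K),
            (T.op ⟨S (S (T.op.adjoint ⟨y, hy⟩)), hx⟩ : K)⟫_ℂ :=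
      hadj ⟨T.op ⟨S (S (T.op.adjoint ⟨y, hy⟩)), hx⟩, hk⟩ ⟨S (S (T.op.adjoint ⟨y, hy⟩)), hx⟩
    have h0 := congrArg (fun t => ⟪t, S (S (T.op.adjoint ⟨y, hy⟩))⟫_ℂ) heq
    simp only [inner_add_left] at h0
    rw [hadj2] at h0
    exact h0.symm
  have i1 : ⟪T.op.adjoint ⟨y, hy⟩, S (S (T.op.adjoint ⟨y, hy⟩))⟫_ℂ
      = ⟪y, (T.op ⟨S (S (T.op.adjoint ⟨y, hy⟩)), hx⟩ : K)⟫_ℂ :=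
    hadj ⟨y, hy⟩ ⟨S (S (T.op.adjoint ⟨y, hy⟩)), hx⟩
  have r1 : ‖A y‖^2 = ‖S (S (T.op.adjoint ⟨y, hy⟩))‖^2
      + ‖(T.op ⟨S (S (T.op.adjoint ⟨y, hy⟩)), hx⟩ : K)‖^2 := by
    rw [norm_sq_re_inner, norm_sq_re_inner, norm_sq_re_inner, ← Complex.add_re]
    exact congrArg Complex.re (i3.trans i2)
  have r2 : ‖A y‖^2
      = Complex.re ⟪y, (T.op ⟨S (S (T.op.adjoint ⟨y, hy⟩)), hx⟩ : K)⟫_ℂ := by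
    rw [norm_sq_re_inner]
    exact congrArg Complex.re (i3.trans i1)
  have rbound : Complex.re ⟪y, (T.op ⟨S (S (T.op.adjoint ⟨y, hy⟩)), hx⟩ : K)⟫_ℂ
      ≤ ‖y‖ * ‖(T.op ⟨S (S (T.op.adjoint ⟨y, hy⟩)), hx⟩ : K)‖ :=
    le_trans (Complex.re_le_norm _) (by exact norm_inner_le_norm _ _)
  by_contra hcon
  push_neg at hcon
  have hb : 0 < ‖y‖ := norm_pos_iff.mpr hy0
  have hq0 : (0:ℝ) ≤ ‖(T.op ⟨S (S (T.op.adjoint ⟨y, hy⟩)), hx⟩ : K)‖ := norm_nonneg _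
  have hp0 : (0:ℝ) ≤ ‖S (S (T.op.adjoint ⟨y, hy⟩))‖ := norm_nonneg _
  have ha0 : (0:ℝ) ≤ ‖A y‖ := norm_nonneg _
  have hyq : ‖y‖ ≤ ‖(T.op ⟨S (S (T.op.adjoint ⟨y, hy⟩)), hx⟩ : K)‖ := by nlinarith
  have hpz : S (S (T.op.adjoint ⟨y, hy⟩)) = 0 := norm_eq_zero.mp (by nlinarith)
  have hkz : (T.op ⟨S (S (T.op.adjoint ⟨y, hy⟩)), hx⟩ : K) = 0 := by
    rw [pmapCongr T.op hx (zero_mem _) hpz]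
    exact T.op.map_zero
  rw [hkz] at r1
  rw [hpz] at r1
  simp only [norm_zero] at r1
  nlinarith

/-- A strictly contractive operator from a finite-dimensional space has norm less than one. -/
lemma norm_lt_one_of_contractive {A : K →L[ℂ] H} (h : ∀ y : K, y ≠ 0 → ‖A y‖ < ‖y‖) :
    ‖A‖ < 1 := by
  rcases subsingleton_or_nontrivial K with hsub | hnt
  · have : A = 0 := by
      ext y
      rw [Subsingleton.elim y 0]
      simp
    rw [this]
    simpa using one_pos
  · have hcs : IsCompact (Metric.sphere (0 : K) 1) := isCompact_sphere 0 1
    have hne : (Metric.sphere (0 : K) 1).Nonempty :=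
      NormedSpace.sphere_nonempty.mpr zero_le_one
    obtain ⟨y₀, hy₀, hmax'⟩ := hcs.exists_isMaxOn hne (A.continuous.norm.continuousOn)
    have hmax : ∀ z ∈ Metric.sphere (0:K) 1, ‖A z‖ ≤ ‖A y₀‖ := fun z hz => hmax' hz
    have hy₀n : ‖y₀‖ = 1 := mem_sphere_zero_iff_norm.mp hy₀
    have hy₀0 : y₀ ≠ 0 := by
      intro h0
      rw [h0, norm_zero] at hy₀n
      norm_num at hy₀n
    have hc1 : ‖A y₀‖ < 1 := by
      have := h y₀ hy₀0
      rwa [hy₀n] at this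
    have hbound : ‖A‖ ≤ ‖A y₀‖ := by
      apply A.opNorm_le_bound (norm_nonneg _)
      intro y
      rcases eq_or_ne y 0 with rfl | hy
      · simp
      · have hr : (0:ℝ) < ‖y‖ := norm_pos_iff.mpr hy
        set z : K := ((‖y‖⁻¹ : ℝ) : ℂ) • y with hz
        have hzn : ‖z‖ = 1 := by
          rw [hz, norm_smul, Complex.norm_real, Real.norm_eq_abs,
            abs_of_nonneg (by positivity)]
          field_simp
        have hmem : z ∈ Metric.sphere (0 : K) 1 := mem_sphere_zero_iff_norm.mpr hzn
        have hAz : ‖A z‖ ≤ ‖A y₀‖ := hmax z hmem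
        have hAzeq : ‖A z‖ = ‖y‖⁻¹ * ‖A y‖ := by
          rw [hz, map_smul, norm_smul, Complex.norm_real, Real.norm_eq_abs,
            abs_of_nonneg (by positivity)]
        rw [hAzeq] at hAz
        calc ‖A y‖ = ‖y‖ * (‖y‖⁻¹ * ‖A y‖) := by field_simp
          _ ≤ ‖y‖ * ‖A y₀‖ := by
              apply mul_le_mul_of_nonneg_left hAz (norm_nonneg y)
          _ = ‖A y₀‖ * ‖y‖ := by ring
    linarith

/-- The identity `A A* + S² = 1` on all of `H`. -/
lemma aadj_identity (T : ClosedDenseOp H K) (A : K →L[ℂ] H) (S : H →L[ℂ] H)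
    (hS : S.IsPositive)
    (h1 : ∀ u : H, ∃ (hx : S (S u) ∈ T.op.domain)
          (hy : T.op ⟨S (S u), hx⟩ ∈ T.op.adjoint.domain),
        S (S u) + T.op.adjoint ⟨T.op ⟨S (S u), hx⟩, hy⟩ = u)
    (h2 : ∀ (x : H) (hx : x ∈ T.op.domain) (hy : T.op ⟨x, hx⟩ ∈ T.op.adjoint.domain),
        S (S (x + T.op.adjoint ⟨T.op ⟨x, hx⟩, hy⟩)) = x)
    (h3 : ∀ y : K, ∃ hy : y ∈ T.op.adjoint.domain, A y = S (T.op.adjoint ⟨y, hy⟩)) :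
    ∀ v : H, A (ContinuousLinearMap.adjoint A v) + S (S v) = v := by
  have hsym := hS.1
  have hadj := T.op.adjoint_isFormalAdjoint T.dense
  have hsymc : ∀ v w : H, ⟪S v, w⟫_ℂ = ⟪v, S w⟫_ℂ := fun v w => hsym v w
  have key : ∀ x ∈ T.op.domain, A (ContinuousLinearMap.adjoint A x) + S (S x) = x := by
    intro x hxdom
    obtain ⟨hk, -⟩ := h3 (T.op ⟨x, hxdom⟩)
    have hx2 := h2 x hxdom hk
    set u : H := x + T.op.adjoint ⟨T.op ⟨x, hxdom⟩, hk⟩ with hu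
    obtain ⟨hx', hk', heq'⟩ := h1 (S u)
    have e : S (S (S u)) = S x := congrArg S hx2
    have hSx : S x ∈ T.op.domain := e ▸ hx'
    have hAadj : ContinuousLinearMap.adjoint A x = T.op ⟨S x, hSx⟩ := by
      apply ext_inner_right ℂ
      intro y'
      rw [ContinuousLinearMap.adjoint_inner_left]
      obtain ⟨hy', hAy'⟩ := h3 y'
      rw [hAy', ← hsymc x (T.op.adjoint ⟨y', hy'⟩), ← inner_conj_symm]
      have hadj3 : ⟪(T.op.adjoint ⟨y', hy'⟩ : H), S x⟫_ℂ
          = ⟪y', (T.op ⟨S x, hSx⟩ : K)⟫_ℂ := hadj ⟨y', hy'⟩ ⟨S x, hSx⟩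
      rw [hadj3, inner_conj_symm]
    obtain ⟨hk2, hA2⟩ := h3 (T.op ⟨S x, hSx⟩)
    have ek : T.op ⟨S (S (S u)), hx'⟩ = T.op ⟨S x, hSx⟩ := pmapCongr _ _ _ e
    have ek2 : T.op.adjoint ⟨T.op ⟨S (S (S u)), hx'⟩, hk'⟩
        = T.op.adjoint ⟨T.op ⟨S x, hSx⟩, hk2⟩ := pmapCongr _ _ _ ek
    have heq2 : S x + T.op.adjoint ⟨T.op ⟨S x, hSx⟩, hk2⟩ = S u := by
      rw [show (T.op.adjoint ⟨T.op ⟨S x, hSx⟩, hk2⟩ : H)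
          = T.op.adjoint ⟨T.op ⟨S (S (S u)), hx'⟩, hk'⟩ from ek2.symm, ← e]
      exact heq'
    have hT2 : T.op.adjoint ⟨T.op ⟨S x, hSx⟩, hk2⟩ = S u - S x := eq_sub_of_add_eq' heq2
    calc A (ContinuousLinearMap.adjoint A x) + S (S x)
        = A (T.op ⟨S x, hSx⟩) + S (S x) := by rw [hAadj]
      _ = S (T.op.adjoint ⟨T.op ⟨S x, hSx⟩, hk2⟩) + S (S x) := by rw [hA2]
      _ = S (S u - S x) + S (S x) := by rw [hT2]
      _ = S (S u) := by rw [map_sub]; abel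
      _ = x := hx2
  have hfun : (fun v : H => A (ContinuousLinearMap.adjoint A v) + S (S v)) = fun v => v := by
    apply Continuous.ext_on T.dense
    · exact (A.continuous.comp (ContinuousLinearMap.adjoint A).continuous).add
        (S.continuous.comp S.continuous)
    · exact continuous_id
    · intro x hx
      exact key x hx
  intro v
  exact congrFun hfun v

set_option maxHeartbeats 1000000 in
set_option synthInstance.maxHeartbeats 1000000 in
/-- Injectivity of the bounded transform. -/
lemma hat_injective (hat : ClosedDenseOp H K → (K →L[ℂ] H))
    (hhat : ∀ T : ClosedDenseOp H K, ∃ S : H →L[ℂ] H, S.IsPositive ∧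
      (∀ u : H, ∃ (hx : S (S u) ∈ T.op.domain)
          (hy : T.op ⟨S (S u), hx⟩ ∈ T.op.adjoint.domain),
        S (S u) + T.op.adjoint ⟨T.op ⟨S (S u), hx⟩, hy⟩ = u) ∧
      (∀ (x : H) (hx : x ∈ T.op.domain) (hy : T.op ⟨x, hx⟩ ∈ T.op.adjoint.domain),
        S (S (x + T.op.adjoint ⟨T.op ⟨x, hx⟩, hy⟩)) = x) ∧
      (∀ y : K, ∃ hy : y ∈ T.op.adjoint.domain, hat T y = S (T.op.adjoint ⟨y, hy⟩))) :
    Function.Injective hat := by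
  intro T₁ T₂ hTS
  obtain ⟨S₁, hS₁, h11, h21, h31⟩ := hhat T₁
  obtain ⟨S₂, hS₂, h12, h22, h32⟩ := hhat T₂
  have id1 := aadj_identity T₁ (hat T₁) S₁ hS₁ h11 h21 h31
  have id2 := aadj_identity T₂ (hat T₂) S₂ hS₂ h12 h22 h32
  have hSS : ∀ v, S₁ (S₁ v) = S₂ (S₂ v) := by
    intro v
    have a := id1 v
    have b := id2 v
    rw [← hTS] at b
    exact add_left_cancel (a.trans b.symm)
  have hS12 : S₁ = S₂ := by
    have hmul : S₁ * S₁ = S₂ * S₂ := by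
      ext v
      exact hSS v
    rw [← CFC.sqrt_mul_self S₁ ((ContinuousLinearMap.nonneg_iff_isPositive S₁).mpr hS₁), hmul,
      CFC.sqrt_mul_self S₂ ((ContinuousLinearMap.nonneg_iff_isPositive S₂).mpr hS₂)]
  rw [← hS12] at h12 h22 h32
  have hsymc : ∀ v w : H, ⟪S₁ v, w⟫_ℂ = ⟪v, S₁ w⟫_ℂ :=
    fun v w => hS₁.1 v w
  have hadj₁ := T₁.op.adjoint_isFormalAdjoint T₁.dense
  have hadj₂ := T₂.op.adjoint_isFormalAdjoint T₂.dense
  have hdom : T₁.op.domain = T₂.op.domain := by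
    ext x
    constructor
    · intro hx
      obtain ⟨hk, -⟩ := h31 (T₁.op ⟨x, hx⟩)
      have hx2 := h21 x hx hk
      obtain ⟨hmem, -, -⟩ := h12 (x + T₁.op.adjoint ⟨T₁.op ⟨x, hx⟩, hk⟩)
      exact hx2 ▸ hmem
    · intro hx
      obtain ⟨hk, -⟩ := h32 (T₂.op ⟨x, hx⟩)
      have hx2 := h22 x hx hk
      obtain ⟨hmem, -, -⟩ := h11 (x + T₂.op.adjoint ⟨T₂.op ⟨x, hx⟩, hk⟩)
      exact hx2 ▸ hmem
  have hval : ∀ (x : T₁.op.domain) (x' : T₂.op.domain), (x : H) = x' → T₁.op x = T₂.op x' := by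
    rintro ⟨x, hx⟩ ⟨x', hx'⟩ h
    simp only at h
    subst h
    apply ext_inner_left ℂ
    intro y
    obtain ⟨hy1, hA1⟩ := h31 y
    obtain ⟨hy2, hA2⟩ := h32 y
    have e1 : ⟪(T₁.op.adjoint ⟨y, hy1⟩ : H), x⟫_ℂ = ⟪y, (T₁.op ⟨x, hx⟩ : K)⟫_ℂ :=
      hadj₁ ⟨y, hy1⟩ ⟨x, hx⟩
    have e2 : ⟪(T₂.op.adjoint ⟨y, hy2⟩ : H), x⟫_ℂ = ⟪y, (T₂.op ⟨x, hx'⟩ : K)⟫_ℂ :=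
      hadj₂ ⟨y, hy2⟩ ⟨x, hx'⟩
    obtain ⟨hk, -⟩ := h31 (T₁.op ⟨x, hx⟩)
    have hx2 := h21 x hx hk
    have c1 : ⟪(T₁.op.adjoint ⟨y, hy1⟩ : H), x⟫_ℂ
        = ⟪hat T₁ y, S₁ (x + T₁.op.adjoint ⟨T₁.op ⟨x, hx⟩, hk⟩)⟫_ℂ := by
      calc ⟪(T₁.op.adjoint ⟨y, hy1⟩ : H), x⟫_ℂ
          = ⟪(T₁.op.adjoint ⟨y, hy1⟩ : H),
              S₁ (S₁ (x + T₁.op.adjoint ⟨T₁.op ⟨x, hx⟩, hk⟩))⟫_ℂ := by rw [hx2]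
        _ = ⟪S₁ (T₁.op.adjoint ⟨y, hy1⟩ : H),
              S₁ (x + T₁.op.adjoint ⟨T₁.op ⟨x, hx⟩, hk⟩)⟫_ℂ :=
            (hsymc _ _).symm
        _ = ⟪hat T₁ y, S₁ (x + T₁.op.adjoint ⟨T₁.op ⟨x, hx⟩, hk⟩)⟫_ℂ := by rw [← hA1]
    have c2 : ⟪(T₂.op.adjoint ⟨y, hy2⟩ : H), x⟫_ℂ
        = ⟪hat T₁ y, S₁ (x + T₁.op.adjoint ⟨T₁.op ⟨x, hx⟩, hk⟩)⟫_ℂ := by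
      calc ⟪(T₂.op.adjoint ⟨y, hy2⟩ : H), x⟫_ℂ
          = ⟪(T₂.op.adjoint ⟨y, hy2⟩ : H),
              S₁ (S₁ (x + T₁.op.adjoint ⟨T₁.op ⟨x, hx⟩, hk⟩))⟫_ℂ := by rw [hx2]
        _ = ⟪S₁ (T₂.op.adjoint ⟨y, hy2⟩ : H),
              S₁ (x + T₁.op.adjoint ⟨T₁.op ⟨x, hx⟩, hk⟩)⟫_ℂ :=
            (hsymc _ _).symm
        _ = ⟪hat T₂ y, S₁ (x + T₁.op.adjoint ⟨T₁.op ⟨x, hx⟩, hk⟩)⟫_ℂ := by rw [← hA2]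
        _ = ⟪hat T₁ y, S₁ (x + T₁.op.adjoint ⟨T₁.op ⟨x, hx⟩, hk⟩)⟫_ℂ := by rw [← hTS]
    rw [← e1, ← e2, c1, c2]
  have hop : T₁.op = T₂.op := LinearPMap.ext hdom (fun x hf hg => hval ⟨x, hf⟩ ⟨x, hg⟩ rfl)
  cases T₁ with
  | mk op₁ d₁ c₁ =>
    cases T₂ with
    | mk op₂ d₂ c₂ =>
      cases (show op₁ = op₂ from hop)
      rfl

end Operators

/-- Let `dim K < ∞` and let `hat` assign to each `T ∈ C(H,K)` the operator
`T̂ = (I + T*T)^{−1/2} T*` (characterized by: there is a positive `S` with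
`S² = (I + T*T)⁻¹` and `T̂ y = S (T* y)`).  Then `hat` is injective into the open unit ball of
`B(K,H)` and `d(T,S) := K_𝓑(T̂, Ŝ)` (the Kobayashi metric) is a metric on `C(H,K)`. -/
theorem hat_injective_and_kobayashi_metric
    {H K : Type*} [NormedAddCommGroup H] [InnerProductSpace ℂ H] [CompleteSpace H]
    [NormedAddCommGroup K] [InnerProductSpace ℂ K] [FiniteDimensional ℂ K]
    (hat : ClosedDenseOp H K → (K →L[ℂ] H))
    (hhat : ∀ T : ClosedDenseOp H K, ∃ S : H →L[ℂ] H, S.IsPositive ∧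
      (∀ u : H, ∃ (hx : S (S u) ∈ T.op.domain)
          (hy : T.op ⟨S (S u), hx⟩ ∈ T.op.adjoint.domain),
        S (S u) + T.op.adjoint ⟨T.op ⟨S (S u), hx⟩, hy⟩ = u) ∧
      (∀ (x : H) (hx : x ∈ T.op.domain) (hy : T.op ⟨x, hx⟩ ∈ T.op.adjoint.domain),
        S (S (x + T.op.adjoint ⟨T.op ⟨x, hx⟩, hy⟩)) = x) ∧
      (∀ y : K, ∃ hy : y ∈ T.op.adjoint.domain, hat T y = S (T.op.adjoint ⟨y, hy⟩))) :
    Function.Injective hat ∧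
    (∀ T : ClosedDenseOp H K, ‖hat T‖ < 1) ∧
    (∀ T S : ClosedDenseOp H K, 0 ≤ kobayashi (K →L[ℂ] H) (hat T) (hat S)) ∧
    (∀ T S : ClosedDenseOp H K,
      kobayashi (K →L[ℂ] H) (hat T) (hat S) = 0 ↔ T = S) ∧
    (∀ T S : ClosedDenseOp H K,
      kobayashi (K →L[ℂ] H) (hat T) (hat S) = kobayashi (K →L[ℂ] H) (hat S) (hat T)) ∧
    (∀ T S R : ClosedDenseOp H K,
      kobayashi (K →L[ℂ] H) (hat T) (hat R) ≤
        kobayashi (K →L[ℂ] H) (hat T) (hat S) + kobayashi (K →L[ℂ] H) (hat S) (hat R)) := by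
  have hnorm : ∀ T : ClosedDenseOp H K, ‖hat T‖ < 1 := by
    intro T
    obtain ⟨S, hS, h1, h2, h3⟩ := hhat T
    exact norm_lt_one_of_contractive fun y hy => hat_apply_norm_lt T (hat T) S hS h1 h3 hy
  have hinj : Function.Injective hat := hat_injective hat hhat
  refine ⟨hinj, hnorm, ?_, ?_, ?_, ?_⟩
  · intro T S
    exact kobayashi_nonneg' _ _
  · intro T S
    constructor
    · intro h
      apply hinj
      by_contra hne
      have := kobayashi_pos_of_ne (hnorm T) (hnorm S) hne
      linarith
    · intro h
      subst h
      exact kobayashi_self (hnorm T)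
  · intro T S
    exact kobayashi_symm' _ _
  · intro T S R
    exact kobayashi_triangle' (hnorm T) (hnorm S) (hnorm R)
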